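/- arXiv:1603.08036 — 6 statements merged into one kernel-verified Lean document; each statement's English description precedes it below -/
import Mathlib

section
/- Let (X, μ) be a probability space and let f : X → X be a measure-preserving map. Then for every measurable set P ⊆ X, limsup_{m → ∞} (1/m) ∑_{n=0}^{m−1} μ(f^{-[n]}(P) ∩ P) ≥ μ(P)², where f^{-[n]}(P) denotes the preimage of P under the n-th iterate of f. -/
open MeasureTheory Filter
open scoped ENNReal

/-- Cauchy–Schwarz for `lintegral` on a probability space: `(∫ g)² ≤ ∫ g²`. -/
lemma aux_sq_lintegral_le {X : Type*} [MeasurableSpace X] (μ : Measure X)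
    [IsProbabilityMeasure μ] {g : X → ℝ≥0∞} (hg : Measurable g) :
    (∫⁻ x, g x ∂μ) ^ 2 ≤ ∫⁻ x, g x ^ 2 ∂μ := by
  have hconj : (2 : ℝ).HolderConjugate 2 := Real.holderConjugate_iff.mpr ⟨one_lt_two, by norm_num⟩
  have h := ENNReal.lintegral_mul_le_Lp_mul_Lq μ hconj hg.aemeasurable
    (aemeasurable_const (b := (1 : ℝ≥0∞)))
  simp only [Pi.mul_apply, mul_one, ENNReal.one_rpow, lintegral_const, measure_univ,
    one_mul] at h
  have e1 : ∀ y : ℝ≥0∞, y ^ (2 : ℝ) = y ^ (2 : ℕ) := fun y => by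
    rw [← ENNReal.rpow_natCast y 2]; norm_num
  simp_rw [e1] at h
  calc (∫⁻ x, g x ∂μ) ^ 2 ≤ ((∫⁻ x, g x ^ (2 : ℕ) ∂μ) ^ (1 / 2 : ℝ)) ^ 2 :=
        pow_le_pow_left' h 2
    _ = ∫⁻ x, g x ^ 2 ∂μ := by
        rw [← ENNReal.rpow_natCast ((∫⁻ x, g x ^ (2 : ℕ) ∂μ) ^ (1 / 2 : ℝ)) 2,
          ← ENNReal.rpow_mul]
        norm_num

/-- For a measure-preserving map `f` of a probability space `(X, μ)` and a measurable set `P`,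
`limsup_m (1/m) ∑_{n<m} μ(f^{-[n]} P ∩ P) ≥ μ(P)²`. -/
theorem limsup_average_measure_iterate_preimage_inter_ge_sq
    {X : Type*} [MeasurableSpace X] (μ : Measure X) [IsProbabilityMeasure μ]
    (f : X → X) (hf : MeasurePreserving f μ μ) (P : Set X) (hP : MeasurableSet P) :
    μ P ^ 2 ≤
      Filter.limsup
        (fun m : ℕ => (m : ℝ≥0∞)⁻¹ * ∑ n ∈ Finset.range m, μ (f^[n] ⁻¹' P ∩ P))
        Filter.atTop := by
  set A : ℕ → Set X := fun n => f^[n] ⁻¹' P with hA_def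
  set T : ℕ → ℝ≥0∞ := fun n => μ (A n ∩ P) with hT_def
  set S : ℕ → ℝ≥0∞ := fun m => ∑ n ∈ Finset.range m, T n with hS_def
  have hAm : ∀ i, MeasurableSet (A i) := fun i => (hf.iterate i).measurable hP
  -- shift invariance
  have hshift : ∀ d i, μ (A (d + i) ∩ A i) = T d := by
    intro d i
    have h1 : A (d + i) ∩ A i = f^[i] ⁻¹' (A d ∩ P) := by
      simp only [hA_def, Set.preimage_inter, Function.iterate_add f d i, Set.preimage_comp]
    rw [h1, (hf.iterate i).measure_preimage ((hAm d).inter hP).nullMeasurableSet]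
  -- pointwise bound on pair measures
  have hpair : ∀ i j, μ (A i ∩ A j) ≤
      (if i ≤ j then T (j - i) else 0) + (if j ≤ i then T (i - j) else 0) := by
    intro i j
    rcases le_total i j with h | h
    · have h1 := hshift (j - i) i
      rw [Nat.sub_add_cancel h] at h1
      have h2 : μ (A i ∩ A j) = T (j - i) := by rw [Set.inter_comm]; exact h1
      rw [if_pos h, h2]
      exact le_self_add
    · have h1 := hshift (i - j) j
      rw [Nat.sub_add_cancel h] at h1
      rw [if_pos h, h1]
      exact le_add_self
  -- helper : inner ite sums equal partial sums
  have hhelper : ∀ m j, j < m →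
      (∑ i ∈ Finset.range m, if i ≤ j then T (j - i) else 0) = S (j + 1) := by
    intro m j hj
    have hsub : Finset.range (j + 1) ⊆ Finset.range m := Finset.range_subset_range.2 hj
    rw [← Finset.sum_subset hsub (fun i _ hi => by
      rw [if_neg]; simpa [Nat.lt_succ_iff] using hi)]
    rw [Finset.sum_congr rfl (fun i hi => if_pos (Nat.lt_succ_iff.1 (Finset.mem_range.1 hi)))]
    exact Finset.sum_range_reflect T (j + 1)
  -- key inequality via Cauchy–Schwarz
  have hkey : ∀ m : ℕ, (m : ℝ≥0∞) ^ 2 * μ P ^ 2 ≤ 2 * ∑ j ∈ Finset.range m, S (j + 1) := by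
    intro m
    set g : X → ℝ≥0∞ := fun x => ∑ i ∈ Finset.range m, (A i).indicator 1 x with hg_def
    have hgm : Measurable g :=
      Finset.measurable_sum _ fun i _ => measurable_one.indicator (hAm i)
    have h1 : ∫⁻ x, g x ∂μ = m * μ P := by
      rw [hg_def]
      rw [lintegral_finset_sum _ fun i _ => measurable_one.indicator (hAm i)]
      have : ∀ i ∈ Finset.range m, ∫⁻ x, (A i).indicator 1 x ∂μ = μ P := by
        intro i _
        rw [lintegral_indicator_one (hAm i)]
        exact (hf.iterate i).measure_preimage hP.nullMeasurableSet
      rw [Finset.sum_congr rfl this, Finset.sum_const, Finset.card_range, nsmul_eq_mul]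
    have h2 : ∫⁻ x, g x ^ 2 ∂μ
        = ∑ i ∈ Finset.range m, ∑ j ∈ Finset.range m, μ (A i ∩ A j) := by
      have hgx : ∀ x, g x ^ 2 = ∑ i ∈ Finset.range m, ∑ j ∈ Finset.range m,
          (A i ∩ A j).indicator 1 x := by
        intro x
        rw [sq, hg_def, Finset.sum_mul_sum]
        refine Finset.sum_congr rfl fun i _ => Finset.sum_congr rfl fun j _ => ?_
        rw [Set.inter_indicator_one]
        rfl
      simp only [hgx]
      rw [lintegral_finset_sum _ fun i _ => Finset.measurable_sum _
        fun j _ => measurable_one.indicator ((hAm i).inter (hAm j))]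
      refine Finset.sum_congr rfl fun i _ => ?_
      rw [lintegral_finset_sum _ fun j _ => measurable_one.indicator ((hAm i).inter (hAm j))]
      exact Finset.sum_congr rfl fun j _ => lintegral_indicator_one ((hAm i).inter (hAm j))
    have hcs := aux_sq_lintegral_le μ hgm
    rw [h1, h2] at hcs
    have hdouble : ∑ i ∈ Finset.range m, ∑ j ∈ Finset.range m, μ (A i ∩ A j)
        ≤ 2 * ∑ j ∈ Finset.range m, S (j + 1) := by
      calc ∑ i ∈ Finset.range m, ∑ j ∈ Finset.range m, μ (A i ∩ A j)
          ≤ ∑ i ∈ Finset.range m, ∑ j ∈ Finset.range m,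
            ((if i ≤ j then T (j - i) else 0) + (if j ≤ i then T (i - j) else 0)) :=
            Finset.sum_le_sum fun i _ => Finset.sum_le_sum fun j _ => hpair i j
        _ = (∑ i ∈ Finset.range m, ∑ j ∈ Finset.range m, if i ≤ j then T (j - i) else 0)
            + ∑ i ∈ Finset.range m, ∑ j ∈ Finset.range m, if j ≤ i then T (i - j) else 0 := by
            simp [Finset.sum_add_distrib]
        _ = (∑ j ∈ Finset.range m, ∑ i ∈ Finset.range m, if i ≤ j then T (j - i) else 0)
            + ∑ i ∈ Finset.range m, ∑ j ∈ Finset.range m, if j ≤ i then T (i - j) else 0 := by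
            rw [Finset.sum_comm]
        _ = (∑ j ∈ Finset.range m, S (j + 1)) + ∑ j ∈ Finset.range m, S (j + 1) := by
            congr 1
            · exact Finset.sum_congr rfl fun j hj =>
                hhelper m j (Finset.mem_range.1 hj)
            · exact Finset.sum_congr rfl fun i hi =>
                hhelper m i (Finset.mem_range.1 hi)
        _ = 2 * ∑ j ∈ Finset.range m, S (j + 1) := (two_mul _).symm
    calc (m : ℝ≥0∞) ^ 2 * μ P ^ 2 = ((m : ℝ≥0∞) * μ P) ^ 2 := (mul_pow _ _ 2).symm
      _ ≤ ∑ i ∈ Finset.range m, ∑ j ∈ Finset.range m, μ (A i ∩ A j) := hcs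
      _ ≤ 2 * ∑ j ∈ Finset.range m, S (j + 1) := hdouble
  -- trivial bound S k ≤ k
  have hSk : ∀ k : ℕ, S k ≤ (k : ℝ≥0∞) := by
    intro k
    calc S k ≤ ∑ _n ∈ Finset.range k, (1 : ℝ≥0∞) :=
          Finset.sum_le_sum fun n _ => prob_le_one
      _ = k := by simp
  -- now argue by contradiction
  by_contra hcon
  push_neg at hcon
  obtain ⟨b, hb1, hb2⟩ := exists_between hcon
  have hev : ∀ᶠ m : ℕ in atTop, (m : ℝ≥0∞)⁻¹ * S m < b :=
    Filter.eventually_lt_of_limsup_lt hb1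
  obtain ⟨K, hK⟩ := Filter.eventually_atTop.1 hev
  have hb_top : b ≠ ⊤ := by
    have : μ P ^ 2 ≤ 1 := by
      calc μ P ^ 2 ≤ 1 ^ 2 := pow_le_pow_left' prob_le_one 2
        _ = 1 := one_pow 2
    exact ne_top_of_lt (hb2.trans_le (this.trans le_top))
  -- S m ≤ b * m for m ≥ K
  have hSle : ∀ m ≥ K, S m ≤ b * m := by
    intro m hm
    rcases Nat.eq_zero_or_pos m with rfl | hm0
    · simp [hS_def]
    have h0 : (m : ℝ≥0∞) ≠ 0 := Nat.cast_ne_zero.2 hm0.ne'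
    have := (hK m hm).le
    calc S m = (m : ℝ≥0∞) * ((m : ℝ≥0∞)⁻¹ * S m) := by
          rw [← mul_assoc, ENNReal.mul_inv_cancel h0 (ENNReal.natCast_ne_top m), one_mul]
      _ ≤ (m : ℝ≥0∞) * b := mul_le_mul_right this _
      _ = b * m := mul_comm _ _
  -- bound each S (j+1)
  have hbound : ∀ j : ℕ, S (j + 1) ≤ (K : ℝ≥0∞) + b * (j + 1) := by
    intro j
    rcases le_or_gt (j + 1) K with h | h
    · calc S (j + 1) ≤ ((j + 1 : ℕ) : ℝ≥0∞) := hSk _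
        _ ≤ (K : ℝ≥0∞) := Nat.cast_le.2 h
        _ ≤ _ := le_self_add
    · calc S (j + 1) ≤ b * (j + 1 : ℕ) := hSle _ h.le
        _ ≤ (K : ℝ≥0∞) + b * (j + 1) := by push_cast; exact le_add_self
  -- combine: m² μP² ≤ 2 m K + b m (m+1) = m (2K + b(m+1))
  have hmain : ∀ m : ℕ, (m : ℝ≥0∞) ^ 2 * μ P ^ 2
      ≤ (m : ℝ≥0∞) * ((2 * K : ℕ) + b * (m + 1)) := by
    intro m
    have h1 : (2 : ℝ≥0∞) * ∑ j ∈ Finset.range m, S (j + 1)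
        ≤ 2 * ∑ j ∈ Finset.range m, ((K : ℝ≥0∞) + b * (j + 1)) :=
      mul_le_mul_right (Finset.sum_le_sum fun j _ => hbound j) 2
    have hgauss : (∑ j ∈ Finset.range m, (j + 1)) * 2 = m * (m + 1) := by
      clear h1
      induction m with
      | zero => simp
      | succ n ih =>
        rw [Finset.sum_range_succ, add_mul, ih]
        ring
    have hcast : ∑ j ∈ Finset.range m, ((j : ℝ≥0∞) + 1)
        = ((∑ j ∈ Finset.range m, (j + 1) : ℕ) : ℝ≥0∞) := by push_cast; rfl
    have h2 : (2 : ℝ≥0∞) * ∑ j ∈ Finset.range m, ((K : ℝ≥0∞) + b * (j + 1))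
        = (m : ℝ≥0∞) * ((2 * K : ℕ) + b * (m + 1)) := by
      rw [Finset.sum_add_distrib, Finset.sum_const, Finset.card_range, nsmul_eq_mul,
        ← Finset.mul_sum, hcast]
      have : ((2 : ℝ≥0∞)) * ((∑ j ∈ Finset.range m, (j + 1) : ℕ) : ℝ≥0∞)
          = ((m : ℝ≥0∞)) * ((m : ℝ≥0∞) + 1) := by
        have := congrArg (fun k : ℕ => (k : ℝ≥0∞)) hgauss
        push_cast at this
        rw [mul_comm]
        simpa [mul_comm] using this
      rw [mul_add, ← mul_assoc, mul_comm (2 : ℝ≥0∞) ((m : ℝ≥0∞)),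
        mul_assoc ((m : ℝ≥0∞)) 2 (K : ℝ≥0∞), ← mul_assoc (2 : ℝ≥0∞) b, mul_comm (2:ℝ≥0∞) b,
        mul_assoc b 2, this, ← mul_assoc b, mul_comm b ((m:ℝ≥0∞)), mul_assoc ((m:ℝ≥0∞)) b,
        ← mul_add]
      push_cast
      ring_nf
    exact (hkey m).trans (h1.trans_eq h2)
  -- divide by m², take the limit
  have hdiv : ∀ m : ℕ, 1 ≤ m → μ P ^ 2 ≤ (m : ℝ≥0∞)⁻¹ * ((2 * K : ℕ) + b) + b := by
    intro m hm
    have h0 : (m : ℝ≥0∞) ≠ 0 := Nat.cast_ne_zero.2 (by omega)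
    have ht : (m : ℝ≥0∞) ≠ ⊤ := ENNReal.natCast_ne_top m
    have step1 : (m : ℝ≥0∞) * ((m : ℝ≥0∞) * μ P ^ 2)
        ≤ (m : ℝ≥0∞) * ((2 * K : ℕ) + b * (m + 1)) := by
      have := hmain m
      rwa [sq, mul_assoc] at this
    have step2 : (m : ℝ≥0∞) * μ P ^ 2 ≤ ((2 * K : ℕ) : ℝ≥0∞) + b * (m + 1) :=
      (ENNReal.mul_le_mul_iff_right h0 ht).1 step1
    have step3 : μ P ^ 2 ≤ (m : ℝ≥0∞)⁻¹ * (((2 * K : ℕ) : ℝ≥0∞) + b * (m + 1)) := by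
      calc μ P ^ 2 = (m : ℝ≥0∞)⁻¹ * ((m : ℝ≥0∞) * μ P ^ 2) := by
            rw [← mul_assoc, ENNReal.inv_mul_cancel h0 ht, one_mul]
        _ ≤ _ := mul_le_mul_right step2 _
    calc μ P ^ 2 ≤ (m : ℝ≥0∞)⁻¹ * (((2 * K : ℕ) : ℝ≥0∞) + b * (m + 1)) := step3
      _ = (m : ℝ≥0∞)⁻¹ * (((2 * K : ℕ) : ℝ≥0∞) + b) + b * ((m : ℝ≥0∞)⁻¹ * m) := by
          ring
      _ = (m : ℝ≥0∞)⁻¹ * ((2 * K : ℕ) + b) + b := by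
          rw [ENNReal.inv_mul_cancel h0 ht, mul_one]
  have htend : Filter.Tendsto (fun m : ℕ => (m : ℝ≥0∞)⁻¹ * ((2 * K : ℕ) + b) + b)
      atTop (nhds b) := by
    have h1 : Filter.Tendsto (fun m : ℕ => (m : ℝ≥0∞)⁻¹ * ((2 * K : ℕ) + b))
        atTop (nhds 0) := by
      have := ENNReal.Tendsto.mul_const ENNReal.tendsto_inv_nat_nhds_zero
        (Or.inr (by finiteness : ((2 * K : ℕ) : ℝ≥0∞) + b ≠ ⊤))
      simpa using this
    simpa using h1.add tendsto_const_nhds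
  have : μ P ^ 2 ≤ b :=
    ge_of_tendsto htend (Filter.eventually_atTop.2 ⟨1, fun m hm => hdiv m hm⟩)
  exact absurd hb2 (not_lt.2 this)
end

section
/- Let (X, μ) be a probability space and let f : X → X be an ergodic measure-preserving map. Then for every measurable set P ⊆ X, the Cesàro averages (1/m) ∑_{n=0}^{m−1} μ(f^{-[n]}(P) ∩ P) converge to μ(P)² as m → ∞. -/
open MeasureTheory Filter
open scoped ENNReal

private lemma indicatorConstLp_congr_set {α E : Type*} [MeasurableSpace α] {μ : Measure α}
    [NormedAddCommGroup E] {p : ℝ≥0∞} {s t : Set α} (h : s = t) (hs : MeasurableSet s)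
    (hμs : μ s ≠ ∞) (ht : MeasurableSet t) (hμt : μ t ≠ ∞) (c : E) :
    indicatorConstLp p hs hμs c = indicatorConstLp p ht hμt c := by
  subst h; rfl

set_option maxHeartbeats 1000000 in
set_option synthInstance.maxHeartbeats 1000000 in
/-- For an ergodic measure-preserving map `f` of a probability space `(X, μ)` and a measurable
set `P`, the Cesàro averages `(1/m) ∑_{n<m} μ(f^{-[n]} P ∩ P)` converge to `μ(P)²`. -/
theorem tendsto_average_measure_iterate_preimage_inter_of_ergodic
    {X : Type*} [MeasurableSpace X] (μ : Measure X) [IsProbabilityMeasure μ]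
    (f : X → X) (hf : Ergodic f μ) (P : Set X) (hP : MeasurableSet P) :
    Filter.Tendsto
      (fun m : ℕ => (m : ℝ≥0∞)⁻¹ * ∑ n ∈ Finset.range m, μ (f^[n] ⁻¹' P ∩ P))
      Filter.atTop (nhds (μ P ^ 2)) := by
  have hfm : Measurable f := hf.measurable
  have hmp : MeasurePreserving f μ μ := hf.toMeasurePreserving
  -- measurability facts about iterated preimages
  have hS : ∀ n : ℕ, MeasurableSet (f^[n] ⁻¹' P) := fun n => hP.preimage (hfm.iterate n)
  have hμS : ∀ n : ℕ, μ (f^[n] ⁻¹' P) ≠ ∞ := fun n => measure_ne_top μ _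
  have hμP : μ P ≠ ∞ := measure_ne_top μ P
  -- the Koopman operator on L²
  set U : Lp ℝ 2 μ →L[ℝ] Lp ℝ 2 μ :=
    (Lp.compMeasurePreservingₗᵢ ℝ f hmp).toContinuousLinearMap with hU
  have hUnorm : ‖U‖ ≤ 1 := LinearIsometry.norm_toContinuousLinearMap_le _
  have hUapp : ∀ x : Lp ℝ 2 μ, U x = Lp.compMeasurePreserving f hmp x := fun _ => rfl
  -- the indicator of P in L²
  set g : Lp ℝ 2 μ := indicatorConstLp 2 hP hμP (1 : ℝ) with hg
  -- iterated Koopman images of g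
  have hiter : ∀ n : ℕ, (⇑U)^[n] g = indicatorConstLp 2 (hS n) (hμS n) (1 : ℝ) := by
    intro n
    induction n with
    | zero =>
      rfl
    | succ n ih =>
      rw [Function.iterate_succ_apply', ih, hUapp,
        Lp.indicatorConstLp_compMeasurePreserving (hS n) (hμS n) (1 : ℝ) hmp]
      rfl
  -- the constant-one function in L²
  set w : Lp ℝ 2 μ := indicatorConstLp 2 MeasurableSet.univ (measure_ne_top μ _) (1 : ℝ) with hw
  have hwinner : ∀ x : Lp ℝ 2 μ, (inner ℝ w x : ℝ) = ∫ a, x a ∂μ := by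
    intro x
    rw [hw, L2.inner_indicatorConstLp_one, setIntegral_univ]
  have hginner : ∀ x : Lp ℝ 2 μ, (inner ℝ g x : ℝ) = ∫ a in P, x a ∂μ := by
    intro x
    rw [hg, L2.inner_indicatorConstLp_one]
  -- inner products with iterates
  have key1 : ∀ n : ℕ, (inner ℝ g ((⇑U)^[n] g) : ℝ) = (μ (f^[n] ⁻¹' P ∩ P)).toReal := by
    intro n
    rw [hginner, hiter n, setIntegral_indicatorConstLp hP (hS n) (hμS n) (1 : ℝ),
      smul_eq_mul, mul_one, measureReal_def]
  have key2 : ∀ n : ℕ, (inner ℝ w ((⇑U)^[n] g) : ℝ) = (μ P).toReal := by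
    intro n
    rw [hwinner, hiter n, integral_indicatorConstLp (hS n) (hμS n) (1 : ℝ), smul_eq_mul, mul_one, measureReal_def,
      (hmp.iterate n).measure_preimage hP.nullMeasurableSet]
  -- von Neumann mean ergodic theorem
  have hVN := U.tendsto_birkhoffAverage_orthogonalProjection hUnorm g
  set π : Lp ℝ 2 μ := (Submodule.orthogonalProjectionOnto (LinearMap.eqLocus (U : Lp ℝ 2 μ →ₗ[ℝ] Lp ℝ 2 μ) ((1 : Lp ℝ 2 μ →L[ℝ] Lp ℝ 2 μ) : Lp ℝ 2 μ →ₗ[ℝ] Lp ℝ 2 μ)) g :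
    Lp ℝ 2 μ) with hπ
  -- π is a fixed point of U, hence a.e. constant by ergodicity
  have hπfix : U π = π := by
    have := (Submodule.orthogonalProjectionOnto (LinearMap.eqLocus (U : Lp ℝ 2 μ →ₗ[ℝ] Lp ℝ 2 μ) ((1 : Lp ℝ 2 μ →L[ℝ] Lp ℝ 2 μ) : Lp ℝ 2 μ →ₗ[ℝ] Lp ℝ 2 μ)) g).2
    rw [LinearMap.mem_eqLocus] at this
    exact this
  obtain ⟨c, hc⟩ : ∃ c : ℝ, (π : X →ₘ[μ] ℝ) = AEEqFun.const X c := by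
    refine hf.eq_const_of_compMeasurePreserving_eq (g := (π : X →ₘ[μ] ℝ)) ?_
    have : (U π : X →ₘ[μ] ℝ) = (π : X →ₘ[μ] ℝ) := by rw [hπfix]
    rwa [hUapp, Lp.compMeasurePreserving_val] at this
  have hπae : (π : Lp ℝ 2 μ) =ᵐ[μ] fun _ => c := by
    have h1 : ⇑π =ᵐ[μ] ⇑(AEEqFun.const X c : X →ₘ[μ] ℝ) := by
      rw [← hc]
    exact h1.trans (AEEqFun.coeFn_const _ _)
  -- expand the Birkhoff average inner products
  have hbirk : ∀ x : Lp ℝ 2 μ, ∀ m : ℕ,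
      (inner ℝ x (birkhoffAverage ℝ (⇑U) _root_.id m g) : ℝ)
        = (m : ℝ)⁻¹ * ∑ n ∈ Finset.range m, (inner ℝ x ((⇑U)^[n] g) : ℝ) := by
    intro x m
    rw [birkhoffAverage, real_inner_smul_right, birkhoffSum, inner_sum]
    rfl
  -- identify c with μ P via the constant-one test vector
  have hcw : (inner ℝ w π : ℝ) = c := by
    rw [hwinner]
    calc ∫ a, π a ∂μ = ∫ _, c ∂μ := integral_congr_ae hπae
      _ = c := by simp
  have hlim_w : Filter.Tendsto (fun m => (inner ℝ w (birkhoffAverage ℝ (⇑U) _root_.id m g) : ℝ))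
      atTop (nhds (inner ℝ w π : ℝ)) := (Filter.Tendsto.inner tendsto_const_nhds hVN)
  have hc_eq : c = (μ P).toReal := by
    have hconst : ∀ᶠ m in atTop,
        (inner ℝ w (birkhoffAverage ℝ (⇑U) _root_.id m g) : ℝ) = (μ P).toReal := by
      filter_upwards [eventually_ge_atTop 1] with m hm
      rw [hbirk]
      simp only [key2]
      rw [Finset.sum_const, Finset.card_range, nsmul_eq_mul, ← mul_assoc,
        inv_mul_cancel₀ (by exact_mod_cast Nat.one_le_iff_ne_zero.mp hm : (m : ℝ) ≠ 0), one_mul]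
    have := (tendsto_congr' hconst).mp hlim_w
    rw [hcw] at this
    exact tendsto_nhds_unique this tendsto_const_nhds
  -- the main real-valued limit
  have hgπ : (inner ℝ g π : ℝ) = (μ P).toReal ^ 2 := by
    rw [hginner]
    calc ∫ a in P, π a ∂μ = ∫ _ in P, c ∂μ :=
          integral_congr_ae (ae_restrict_of_ae (hπae.mono fun a ha => ha))
      _ = (μ P).toReal • c := by rw [setIntegral_const, measureReal_def]
      _ = (μ P).toReal ^ 2 := by rw [hc_eq, smul_eq_mul, sq]
  have hreal : Filter.Tendsto
      (fun m : ℕ => (m : ℝ)⁻¹ * ∑ n ∈ Finset.range m, (μ (f^[n] ⁻¹' P ∩ P)).toReal)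
      atTop (nhds ((μ P).toReal ^ 2)) := by
    have h : Filter.Tendsto (fun m => (inner ℝ g (birkhoffAverage ℝ (⇑U) _root_.id m g) : ℝ))
        atTop (nhds (inner ℝ g π : ℝ)) := Filter.Tendsto.inner tendsto_const_nhds hVN
    rw [hgπ] at h
    refine (tendsto_congr fun m => ?_).mp h
    rw [hbirk]
    simp only [key1]
  -- convert to ℝ≥0∞
  have heq : ∀ m : ℕ, (m : ℝ≥0∞)⁻¹ * ∑ n ∈ Finset.range m, μ (f^[n] ⁻¹' P ∩ P)
      = ENNReal.ofReal ((m : ℝ)⁻¹ * ∑ n ∈ Finset.range m, (μ (f^[n] ⁻¹' P ∩ P)).toReal) := by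
    intro m
    rcases Nat.eq_zero_or_pos m with rfl | hm
    · simp
    · rw [ENNReal.ofReal_mul (by positivity),
        ENNReal.ofReal_sum_of_nonneg (fun n _ => ENNReal.toReal_nonneg),
        ENNReal.ofReal_inv_of_pos (by exact_mod_cast hm), ENNReal.ofReal_natCast]
      congr 1
      exact Finset.sum_congr rfl fun n _ => (ENNReal.ofReal_toReal (measure_ne_top μ _)).symm
  have : Filter.Tendsto
      (fun m : ℕ => ENNReal.ofReal ((m : ℝ)⁻¹ * ∑ n ∈ Finset.range m, (μ (f^[n] ⁻¹' P ∩ P)).toReal))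
      atTop (nhds (ENNReal.ofReal ((μ P).toReal ^ 2))) :=
    (ENNReal.continuous_ofReal.tendsto _).comp hreal
  rw [ENNReal.ofReal_pow ENNReal.toReal_nonneg, ENNReal.ofReal_toReal hμP] at this
  exact (tendsto_congr heq).mpr this
end

section
/- Let X be a compact metric space, f : X → X a continuous map, and ν a Borel probability measure on X. Suppose p, q ∈ X satisfy dist(f^[n](p), f^[n](q)) → 0 as n → ∞, and the empirical measures e_n(q) := (1/n) ∑_{i=0}^{n−1} δ_{f^[i](q)} converge weakly to ν. Then the empirical measures e_n(p) := (1/n) ∑_{i=0}^{n−1} δ_{f^[i](p)} also converge weakly to ν. -/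
open MeasureTheory Filter Topology

/-- On a compact metric space, if the iterated orbits of `p` and `q` under a continuous map `f`
are asymptotic (`dist (f^[n] p) (f^[n] q) → 0`) and the empirical measures of `q` converge
weakly to a Borel probability measure `ν` (i.e. the Birkhoff averages of every continuous
function converge to its `ν`-integral), then the empirical measures of `p` converge weakly
to `ν` as well. -/
theorem empirical_tendsto_of_dist_iterate_tendsto_zero
    {X : Type*} [MetricSpace X] [CompactSpace X] [MeasurableSpace X] [BorelSpace X]
    (f : X → X) (hf : Continuous f) (ν : Measure X) [IsProbabilityMeasure ν]
    (p q : X)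
    (hdist : Tendsto (fun n : ℕ => dist (f^[n] p) (f^[n] q)) atTop (𝓝 0))
    (hq : ∀ φ : C(X, ℝ),
      Tendsto (fun n : ℕ => (n : ℝ)⁻¹ * ∑ i ∈ Finset.range n, φ (f^[i] q)) atTop
        (𝓝 (∫ x, φ x ∂ν))) :
    ∀ φ : C(X, ℝ),
      Tendsto (fun n : ℕ => (n : ℝ)⁻¹ * ∑ i ∈ Finset.range n, φ (f^[i] p)) atTop
        (𝓝 (∫ x, φ x ∂ν)) := by
  intro φ
  have hUC : UniformContinuous φ := CompactSpace.uniformContinuous_of_continuous φ.continuous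
  have hdiff : Tendsto (fun n : ℕ => φ (f^[n] p) - φ (f^[n] q)) atTop (𝓝 0) := by
    rw [NormedAddCommGroup.tendsto_nhds_zero]
    intro ε hε
    rcases Metric.uniformContinuous_iff.1 hUC ε hε with ⟨δ, hδ, hδε⟩
    filter_upwards [(Metric.tendsto_nhds.1 hdist) δ hδ] with n hn
    have : dist (f^[n] p) (f^[n] q) < δ := by simpa [Real.dist_eq, abs_of_nonneg dist_nonneg] using hn
    simpa [Real.dist_eq] using hδε this
  have hces : Tendsto (fun n : ℕ => (n : ℝ)⁻¹ * ∑ i ∈ Finset.range n,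
      (φ (f^[i] p) - φ (f^[i] q))) atTop (𝓝 0) := hdiff.cesaro
  have := (hq φ).add hces
  rw [add_zero] at this
  convert this using 2 with n
  rw [← mul_add, ← Finset.sum_add_distrib]
  congr 1
  apply Finset.sum_congr rfl
  intro i _
  ring
end

section
/- Let δ, θ₀ be real numbers with 0 ≤ δ, 0 < θ₀ and θ₀ ≤ 1 − δ, let θ ∈ ℂ with |θ| ≤ θ₀, and let x, y, z ∈ ℂ satisfy |z² − x·y| ≤ δ · max(|x|, |y|, |z|)². Set X = x², Y = y², Z = x·y + θ·(z² − x·y). Then |Z² − X·Y| ≤ 2δ · max(|X|, |Y|, |Z|)². (This expresses that the homogeneous map F_θ(x,y,z) = (x², y², xy + θ(z² − xy)) maps the δ-tube around the conic {z² = xy} into the 2δ-tube.) -/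
/-- The map `F_θ(x,y,z) = (x², y², xy + θ(z² − xy))` sends the `δ`-tube around the conic
`{z² = xy}` into the `2δ`-tube: if `|z² − xy| ≤ δ·max(|x|,|y|,|z|)²`, `|θ| ≤ θ₀`,
`0 ≤ δ`, `0 < θ₀` and `θ₀ ≤ 1 − δ`, then `|Z² − XY| ≤ 2δ·max(|X|,|Y|,|Z|)²` where
`X = x²`, `Y = y²`, `Z = xy + θ(z² − xy)`. -/
theorem F_theta_maps_tube_into_tube
    (δ θ₀ : ℝ) (hδ : 0 ≤ δ) (hθ₀ : 0 < θ₀) (hθδ : θ₀ ≤ 1 - δ)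
    (θ : ℂ) (hθ : ‖θ‖ ≤ θ₀)
    (x y z : ℂ)
    (h : ‖z ^ 2 - x * y‖ ≤
      δ * (max (‖x‖) (max (‖y‖) (‖z‖))) ^ 2)
    (X Y Z : ℂ) (hX : X = x ^ 2) (hY : Y = y ^ 2) (hZ : Z = x * y + θ * (z ^ 2 - x * y)) :
    ‖Z ^ 2 - X * Y‖ ≤
      2 * δ * (max (‖X‖) (max (‖Y‖) (‖Z‖))) ^ 2 := by
  set a := ‖x‖ with ha
  set b := ‖y‖ with hb
  set c := ‖z‖ with hc
  set m := max a (max b c) with hm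
  set e := ‖z ^ 2 - x * y‖ with he
  set M := max (‖X‖) (max (‖Y‖) (‖Z‖)) with hM
  have ha0 : 0 ≤ a := norm_nonneg x
  have hb0 : 0 ≤ b := norm_nonneg y
  have hc0 : 0 ≤ c := norm_nonneg z
  have he0 : 0 ≤ e := norm_nonneg _
  have hθ0 : 0 ≤ ‖θ‖ := norm_nonneg θ
  have hXa : ‖X‖ = a ^ 2 := by rw [hX, norm_pow]
  have hYb : ‖Y‖ = b ^ 2 := by rw [hY, norm_pow]
  have haM : a ^ 2 ≤ M := hXa ▸ le_max_left _ _
  have hbM : b ^ 2 ≤ M := hYb ▸ le_trans (le_max_left _ _) (le_max_right _ _)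
  have hZM : ‖Z‖ ≤ M := le_trans (le_max_right _ _) (le_max_right _ _)
  have hM0 : 0 ≤ M := le_trans (sq_nonneg a) haM
  -- |x*y| ≤ M
  have habM : a * b ≤ M := by
    rcases le_total a b with hab | hab
    · nlinarith
    · nlinarith
  -- c^2 ≤ a*b + δ * m^2
  have hcz : c ^ 2 ≤ a * b + δ * m ^ 2 := by
    have h1 : ‖z ^ 2‖ ≤ ‖z ^ 2 - x * y‖ + ‖x * y‖ := by
      calc ‖z ^ 2‖ = ‖(z ^ 2 - x * y) + x * y‖ := by ring_nf
        _ ≤ _ := norm_add_le _ _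
    rw [norm_pow, norm_mul] at h1
    calc c ^ 2 ≤ e + a * b := h1
      _ ≤ δ * m ^ 2 + a * b := by linarith [h]
      _ = a * b + δ * m ^ 2 := by ring
  -- key: θ₀ * m^2 ≤ M
  have hkey : θ₀ * m ^ 2 ≤ M := by
    have hθ1 : θ₀ ≤ 1 := by linarith
    have hma : m = a ∨ m = b ∨ m = c := by
      rcases max_cases a (max b c) with ⟨h1, _⟩ | ⟨h1, _⟩
      · exact Or.inl h1
      · rcases max_cases b c with ⟨h2, _⟩ | ⟨h2, _⟩
        · exact Or.inr (Or.inl (h1.trans h2))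
        · exact Or.inr (Or.inr (h1.trans h2))
    rcases hma with h1 | h1 | h1
    · nlinarith
    · nlinarith
    · -- m = c
      rw [h1] at hcz ⊢
      -- (1-δ) c^2 ≤ a*b
      have : (1 - δ) * c ^ 2 ≤ a * b := by nlinarith
      nlinarith
  -- |θ| * e ≤ δ * M
  have hθe : ‖θ‖ * e ≤ δ * M := by
    have h1 : ‖θ‖ * e ≤ θ₀ * (δ * m ^ 2) := by
      have hm2 : 0 ≤ δ * m ^ 2 := mul_nonneg hδ (sq_nonneg m)
      exact mul_le_mul hθ h he0 (le_of_lt hθ₀)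
    calc ‖θ‖ * e ≤ θ₀ * (δ * m ^ 2) := h1
      _ = δ * (θ₀ * m ^ 2) := by ring
      _ ≤ δ * M := mul_le_mul_of_nonneg_left hkey hδ
  -- factor Z² - XY
  have hfac : Z ^ 2 - X * Y = θ * (z ^ 2 - x * y) * (x * y + Z) := by
    subst hX hY hZ; ring
  rw [hfac, norm_mul, norm_mul, ← he]
  have hsum : ‖x * y + Z‖ ≤ 2 * M := by
    calc ‖x * y + Z‖ ≤ ‖x * y‖ + ‖Z‖ := norm_add_le _ _
      _ = a * b + ‖Z‖ := by rw [norm_mul]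
      _ ≤ 2 * M := by linarith
  calc ‖θ‖ * e * ‖x * y + Z‖
      ≤ (δ * M) * (2 * M) :=
        mul_le_mul hθe hsum (norm_nonneg _) (mul_nonneg hδ hM0)
    _ = 2 * δ * M ^ 2 := by ring
end

section
/- Let a : Fin 3 → ℂ, let ε ≥ 0, and let i ∈ Fin 3 be an index such that |a(j)| ≤ |a(i)| for all j and a(i) ≠ 0, and assume |a(0)·a(1) − a(2)²| ≤ ε·|a(i)|². Then every x : Fin 3 → ℂ satisfying the conic equation a(i)²·(x(0)·x(1) − x(2)²) = x(i)²·(a(0)·a(1) − a(2)²) also satisfies |x(0)·x(1) − x(2)²| ≤ ε·max(|x(0)|, |x(1)|, |x(2)|)². (Hence through every point of the tube { |x₀x₁ − x₂²| ≤ ε·max(|x₀|,|x₁|,|x₂|)² } there passes a conic entirely contained in the tube, which shows the rational hull of the complement of the tube equals the complement itself.) -/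
/-- Through every point `a` of the tube `{ |x₀x₁ − x₂²| ≤ ε·max(|x₀|,|x₁|,|x₂|)² }` there
passes a conic contained in the tube: if `|a j| ≤ |a i|` for all `j`, `a i ≠ 0` and
`|a₀a₁ − a₂²| ≤ ε·|a i|²`, then every `x` satisfying the conic equation
`(a i)²·(x₀x₁ − x₂²) = (x i)²·(a₀a₁ − a₂²)` lies in the tube. -/
theorem conic_through_point_stays_in_tube
    (a : Fin 3 → ℂ) (ε : ℝ) (hε : 0 ≤ ε) (i : Fin 3)
    (hmax : ∀ j, ‖a j‖ ≤ ‖a i‖) (hne : a i ≠ 0)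
    (ha : ‖a 0 * a 1 - (a 2) ^ 2‖ ≤ ε * (‖a i‖) ^ 2)
    (x : Fin 3 → ℂ)
    (hx : (a i) ^ 2 * (x 0 * x 1 - (x 2) ^ 2) = (x i) ^ 2 * (a 0 * a 1 - (a 2) ^ 2)) :
    ‖x 0 * x 1 - (x 2) ^ 2‖ ≤
      ε * (max (‖x 0‖) (max (‖x 1‖) (‖x 2‖))) ^ 2 := by
  have hai : 0 < ‖a i‖ := by
    simpa [norm_pos_iff] using hne
  have habs : (‖a i‖) ^ 2 * ‖x 0 * x 1 - (x 2) ^ 2‖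
      = (‖x i‖) ^ 2 * ‖a 0 * a 1 - (a 2) ^ 2‖ := by
    have := congrArg (‖·‖) hx
    simpa [norm_mul, norm_pow] using this
  set M := max (‖x 0‖) (max (‖x 1‖) (‖x 2‖)) with hM
  have hxi : ‖x i‖ ≤ M := by
    fin_cases i <;> simp [hM, le_max_iff, le_refl]
  have hxi0 : 0 ≤ ‖x i‖ := norm_nonneg _
  have key : (‖a i‖) ^ 2 * ‖x 0 * x 1 - (x 2) ^ 2‖
      ≤ (‖a i‖) ^ 2 * (ε * M ^ 2) := by
    rw [habs]
    calc (‖x i‖) ^ 2 * ‖a 0 * a 1 - (a 2) ^ 2‖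
        ≤ (‖x i‖) ^ 2 * (ε * (‖a i‖) ^ 2) := by
          exact mul_le_mul_of_nonneg_left ha (by positivity)
      _ ≤ M ^ 2 * (ε * (‖a i‖) ^ 2) := by
          apply mul_le_mul_of_nonneg_right _ (by positivity)
          exact pow_le_pow_left₀ hxi0 hxi 2
      _ = (‖a i‖) ^ 2 * (ε * M ^ 2) := by ring
  exact le_of_mul_le_mul_left key (by positivity)
end

section
/- Let X be a compact metric space, let (μ_n) be a sequence of finite Borel measures on X with sup_n μ_n(X) < ∞ and μ_n(X) → 1, and let ν be a Borel probability measure on X. Suppose that every weak-* cluster value μ of the sequence (μ_n) satisfies ν ≤ μ (i.e. ν(A) ≤ μ(A) for every Borel set A). Then μ_n converges weakly to ν. -/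
open MeasureTheory Filter Topology
open scoped NNReal ENNReal

section AuxiliaryEquidistribution

open BoundedContinuousFunction Set TopologicalSpace

variable {X : Type*} [MetricSpace X] [CompactSpace X] [MeasurableSpace X] [BorelSpace X]

/-- The real-valued continuous map underlying a bounded continuous `ℝ≥0`-valued function. -/
def crealCM (f : X →ᵇ ℝ≥0) : C(X, ℝ) :=
  ⟨fun x => (f x : ℝ), NNReal.continuous_coe.comp f.continuous⟩

@[simp] lemma crealCM_apply (f : X →ᵇ ℝ≥0) (x : X) : crealCM f x = (f x : ℝ) := rfl

lemma cm_integrable (g : C(X,ℝ)) (μ : Measure X) [IsFiniteMeasure μ] : Integrable ⇑g μ := by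
  have := BoundedContinuousFunction.integrable μ (BoundedContinuousFunction.mkOfCompact g)
  exact this

lemma nnreal_min_sum (t : ℝ≥0) : ∀ M : ℕ, ∑ i ∈ Finset.range M, min 1 (t - i) = min t M := by
  intro M
  induction M with
  | zero => simp
  | succ M ih =>
    rw [Finset.sum_range_succ, ih]
    have hcast : ((M+1 : ℕ) : ℝ≥0) = (M:ℝ≥0) + 1 := by push_cast; ring
    rw [hcast]
    rcases le_total t M with h | h
    · have h0 : t - (M:ℝ≥0) = 0 := tsub_eq_zero_of_le h
      rw [h0]
      simp [min_eq_left h, min_eq_left (h.trans (le_self_add : (M:ℝ≥0) ≤ M + 1))]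
    · rw [min_eq_right h]
      rcases le_total t ((M:ℝ≥0)+1) with h2 | h2
      · have hle : t - (M:ℝ≥0) ≤ 1 := by
          rw [tsub_le_iff_left]; exact h2
        rw [min_eq_left h2, min_eq_right hle, add_tsub_cancel_of_le h]
      · have hge : (1:ℝ≥0) ≤ t - M :=
          le_tsub_of_add_le_left h2
        rw [min_eq_right h2, min_eq_left hge]

theorem exists_repr (ℓ : C(X,ℝ) → ℝ)
    (hadd : ∀ g h, ℓ (g + h) = ℓ g + ℓ h)
    (hsmul : ∀ (r : ℝ) g, ℓ (r • g) = r * ℓ g)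
    (hmono : ∀ g h : C(X,ℝ), g ≤ h → ℓ g ≤ ℓ h)
    (h1 : ℓ 1 = 1) :
    ∃ μ : Measure X, IsProbabilityMeasure μ ∧ ∀ g : C(X,ℝ), ∫ x, g x ∂μ = ℓ g := by
  classical
  have hzero : ℓ 0 = 0 := by
    have := hsmul 0 0
    simpa using this
  have hpos : ∀ g : C(X,ℝ), 0 ≤ g → 0 ≤ ℓ g := fun g hg => hzero ▸ hmono 0 g hg
  have hcreal_nonneg : ∀ f : X →ᵇ ℝ≥0, (0:C(X,ℝ)) ≤ crealCM f := by
    intro f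
    rw [ContinuousMap.le_def]
    intro x
    exact (f x).coe_nonneg
  -- the ℝ≥0-linear functional
  set Λ : (X →ᵇ ℝ≥0) →ₗ[ℝ≥0] ℝ≥0 :=
    { toFun := fun f => (ℓ (crealCM f)).toNNReal
      map_add' := by
        intro f g
        show (ℓ (crealCM (f+g))).toNNReal = (ℓ (crealCM f)).toNNReal + (ℓ (crealCM g)).toNNReal
        have hc : crealCM (f + g) = crealCM f + crealCM g := by
          ext x; simp [crealCM]
        rw [hc, hadd]
        exact Real.toNNReal_add (hpos _ (hcreal_nonneg f)) (hpos _ (hcreal_nonneg g))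
      map_smul' := by
        intro r f
        show (ℓ (crealCM (r • f))).toNNReal = r • (ℓ (crealCM f)).toNNReal
        have hc : crealCM (r • f) = (r:ℝ) • crealCM f := by
          ext x; simp [crealCM, NNReal.smul_def]
        rw [hc, hsmul]
        simp [Real.toNNReal_mul r.coe_nonneg, Real.toNNReal_coe] } with hΛdef
  have hΛcoe : ∀ f : X →ᵇ ℝ≥0, (Λ f : ℝ) = ℓ (crealCM f) := by
    intro f
    exact Real.coe_toNNReal _ (hpos _ (hcreal_nonneg f))
  have hΛmono : ∀ f g : X →ᵇ ℝ≥0, (∀ x, f x ≤ g x) → Λ f ≤ Λ g := by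
    intro f g hfg
    have : crealCM f ≤ crealCM g := by
      rw [ContinuousMap.le_def]
      intro x
      exact_mod_cast hfg x
    rw [← NNReal.coe_le_coe, hΛcoe, hΛcoe]
    exact hmono _ _ this
  have hΛone : Λ (1 : X →ᵇ ℝ≥0) = 1 := by
    have hc : crealCM (1 : X →ᵇ ℝ≥0) = 1 := by ext x; simp [crealCM]
    rw [← NNReal.coe_inj, hΛcoe, hc, h1, NNReal.coe_one]
  set Λc : CompactlySupportedContinuousMap X ℝ≥0 →ₗ[ℝ≥0] ℝ≥0 :=
    { toFun := fun f => Λ (f : X →ᵇ ℝ≥0)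
      map_add' := fun f g =>
        (congrArg Λ (BoundedContinuousFunction.ext fun x => rfl)).trans (map_add Λ (f : X →ᵇ ℝ≥0) (g : X →ᵇ ℝ≥0))
      map_smul' := fun r f =>
        (congrArg Λ (BoundedContinuousFunction.ext fun x => rfl)).trans (Λ.map_smul r (f : X →ᵇ ℝ≥0)) }
    with hΛcdef
  have hΛc' : ∀ f : CompactlySupportedContinuousMap X ℝ≥0, Λc f = Λ (f : X →ᵇ ℝ≥0) :=
    fun _ => rfl
  have hΛc : ∀ g : X →ᵇ ℝ≥0,
      Λc (CompactlySupportedContinuousMap.continuousMapEquiv g.toContinuousMap) = Λ g :=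
    fun _ => rfl
  -- bundled pointwise product and other helpers
  set mulB : (X →ᵇ ℝ≥0) → (X →ᵇ ℝ≥0) → (X →ᵇ ℝ≥0) := fun f g =>
    mkOfCompact ⟨fun x => f x * g x, f.continuous.mul g.continuous⟩ with hmulB
  -- the Riesz content
  set Γ : Content X :=
    { toFun := rieszContentAux Λc
      mono' := fun _ _ h => rieszContentAux_mono Λc h
      sup_le' := fun K₁ K₂ => rieszContentAux_sup_le Λc K₁ K₂
      sup_disjoint' := by
        intro K₁ K₂ hdisj _ _
        refine le_antisymm (rieszContentAux_sup_le Λc K₁ K₂) ?_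
        obtain ⟨w, hw0, hw1, hw01⟩ :=
          exists_continuous_zero_one_of_isCompact K₁.2 K₂.2.isClosed hdisj
        set u₁ : X →ᵇ ℝ≥0 :=
          mkOfCompact ⟨fun x => Real.toNNReal (1 - w x),
            continuous_real_toNNReal.comp (continuous_const.sub w.continuous)⟩ with hu₁
        set u₂ : X →ᵇ ℝ≥0 :=
          mkOfCompact ⟨fun x => Real.toNNReal (w x),
            continuous_real_toNNReal.comp w.continuous⟩ with hu₂
        refine le_csInf (rieszContentAux_image_nonempty Λc (K₁ ⊔ K₂)) ?_
        rintro b ⟨f, hf, rfl⟩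
        have hsplit : mulB f u₁ + mulB f u₂ = f := by
          ext x
          have h01 := hw01 x
          have hsum1 : Real.toNNReal (1 - w x) + Real.toNNReal (w x) = 1 := by
            rw [← NNReal.coe_inj]
            push_cast [Real.coe_toNNReal _ (by linarith [h01.1, h01.2] : (0:ℝ) ≤ 1 - w x),
              Real.coe_toNNReal _ h01.1]
            ring
          simp only [hmulB, hu₁, hu₂, BoundedContinuousFunction.coe_add, Pi.add_apply,
            mkOfCompact_apply, ContinuousMap.coe_mk]
          rw [← mul_add, hsum1, mul_one]
        have h₁ : rieszContentAux Λc K₁ ≤ Λ (mulB f u₁) := by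
          rw [← hΛc (mulB f u₁)]
          apply rieszContentAux_le Λc
          intro x hx
          have hfx : (1:ℝ≥0) ≤ f x := hf x (Or.inl hx)
          have hux : u₁ x = 1 := by
            rw [hu₁]
            show Real.toNNReal (1 - w x) = 1
            rw [hw0 hx]
            norm_num
          show (1:ℝ≥0) ≤ f x * u₁ x
          rw [hux, mul_one]
          exact hfx
        have h₂ : rieszContentAux Λc K₂ ≤ Λ (mulB f u₂) := by
          rw [← hΛc (mulB f u₂)]
          apply rieszContentAux_le Λc
          intro x hx
          have hfx : (1:ℝ≥0) ≤ f x := hf x (Or.inr hx)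
          have hux : u₂ x = 1 := by
            rw [hu₂]
            show Real.toNNReal (w x) = 1
            rw [hw1 hx]
            norm_num
          show (1:ℝ≥0) ≤ f x * u₂ x
          rw [hux, mul_one]
          exact hfx
        calc rieszContentAux Λc K₁ + rieszContentAux Λc K₂ ≤ Λ (mulB f u₁) + Λ (mulB f u₂) :=
              add_le_add h₁ h₂
          _ = Λ (mulB f u₁ + mulB f u₂) := (map_add Λ _ _).symm
          _ = Λc f := by rw [hsplit, hΛc'] } with hΓ
  have hΓapp : ∀ K : Compacts X, Γ.toFun K = rieszContentAux Λc K := fun _ => rfl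
  -- regularity of the content
  have hreg : Γ.ContentRegular := by
    intro K
    refine le_antisymm ?_ ?_
    · apply le_iInf
      intro K'
      apply le_iInf
      intro hKK'
      exact ENNReal.coe_le_coe.mpr
        (rieszContentAux_mono Λc (hKK'.trans interior_subset))
    · apply ENNReal.le_of_forall_pos_le_add
      intro ε hε _
      have hε2 : 0 < ε / 2 := half_pos hε
      obtain ⟨f, hf1, hfΛ⟩ := exists_lt_rieszContentAux_add_pos Λc K hε2
      set c := rieszContentAux Λc K with hc
      set δ : ℝ≥0 := (ε/2) / (c + ε) with hδ
      have hcε : (0:ℝ≥0) < c + ε := lt_of_lt_of_le hε le_add_self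
      have hδpos : 0 < δ := div_pos hε2 hcε
      have hδlt : δ < 1 := by
        rw [hδ, div_lt_one hcε]
        calc ε/2 < ε := half_lt_self hε
          _ ≤ c + ε := le_add_self
      have h1δ : (0:ℝ≥0) < 1 - δ := tsub_pos_of_lt hδlt
      set K' : Compacts X :=
        ⟨{x | (1 - δ : ℝ≥0) ≤ f x}, (IsClosed.isCompact (isClosed_le continuous_const f.continuous))⟩
        with hK'
      have hKint : (K : Set X) ⊆ interior (K' : Set X) := by
        have hopen : IsOpen {x | (1 - δ : ℝ≥0) < f x} := isOpen_lt continuous_const f.continuous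
        have hsub : {x | (1 - δ : ℝ≥0) < f x} ⊆ (K' : Set X) := by
          intro x hx
          show (1 - δ : ℝ≥0) ≤ f x
          exact le_of_lt hx
        intro x hx
        apply interior_mono hsub
        rw [hopen.interior_eq]
        show (1 - δ : ℝ≥0) < f x
        calc (1 - δ : ℝ≥0) < 1 := tsub_lt_self one_pos hδpos
          _ ≤ f x := hf1 x hx
      have hK'le : rieszContentAux Λc K' ≤ (1 - δ)⁻¹ * Λc f := by
        have h := rieszContentAux_le Λc (K := K') (f := (1 - δ)⁻¹ • f) ?_
        · rwa [Λc.map_smul, smul_eq_mul] at h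
        · intro x hx
          have hfx : (1 - δ : ℝ≥0) ≤ f x := hx
          show (1:ℝ≥0) ≤ (1 - δ)⁻¹ • f x
          rw [smul_eq_mul]
          calc (1:ℝ≥0) = (1 - δ)⁻¹ * (1 - δ) := (inv_mul_cancel₀ h1δ.ne').symm
            _ ≤ (1 - δ)⁻¹ * f x := mul_le_mul_of_nonneg_left hfx zero_le
      have harith : (1 - δ)⁻¹ * (c + ε/2) ≤ c + ε := by
        rw [inv_mul_le_iff₀ h1δ]
        have hδc : δ * (c + ε) = ε/2 := by
          rw [hδ, div_mul_cancel₀ _ hcε.ne']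
        have hexp : (1 - δ) * (c + ε) = c + ε - ε/2 := by
          rw [tsub_mul, one_mul, hδc]
        rw [hexp]
        apply le_tsub_of_add_le_right
        rw [add_assoc, add_halves]
      have hfin : rieszContentAux Λc K' ≤ c + ε :=
        hK'le.trans ((mul_le_mul_of_nonneg_left hfΛ.le zero_le).trans harith)
      refine le_trans (iInf_le_of_le K' (iInf_le_of_le hKint le_rfl)) ?_
      calc ((Γ.toFun K' : ℝ≥0) : ℝ≥0∞) = (rieszContentAux Λc K' : ℝ≥0∞) := by rw [hΓapp]
        _ ≤ ((c + ε : ℝ≥0) : ℝ≥0∞) := ENNReal.coe_le_coe.mpr hfin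
        _ = ((Γ.toFun K : ℝ≥0) : ℝ≥0∞) + (ε : ℝ≥0∞) := by rw [hΓapp, ← hc]; push_cast; ring
  -- the measure
  set μ0 : Measure X := Γ.measure with hμ0
  have hμK : ∀ K : Compacts X, μ0 ↑K = (Γ.toFun K : ℝ≥0∞) :=
    fun K => Γ.measure_eq_content_of_regular hreg K
  have hcontuniv : Γ.toFun ⟨Set.univ, isCompact_univ⟩ = 1 := by
    rw [hΓapp]
    refine le_antisymm ?_ ?_
    · have := rieszContentAux_le Λc (K := ⟨Set.univ, isCompact_univ⟩) (f := CompactlySupportedContinuousMap.continuousMapEquiv (1 : X →ᵇ ℝ≥0).toContinuousMap)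
        (fun x _ => le_rfl)
      rwa [hΛc, hΛone] at this
    · apply le_csInf (rieszContentAux_image_nonempty Λc _)
      rintro b ⟨f, hf, rfl⟩
      rw [← hΛone, hΛc']
      apply hΛmono
      intro x
      exact hf x (Set.mem_univ x)
  have hμuniv : μ0 Set.univ = 1 := by
    have := hμK ⟨Set.univ, isCompact_univ⟩
    rw [hcontuniv] at this
    simpa using this
  have hprob : IsProbabilityMeasure μ0 := ⟨hμuniv⟩
  -- Direction A : ∫⁻ f ≤ Λ f
  have dirA : ∀ f : X →ᵇ ℝ≥0, ∫⁻ x, (f x : ℝ≥0∞) ∂μ0 ≤ (Λ f : ℝ≥0∞) := by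
    intro f
    have hfm : Measurable fun x => (f x : ℝ≥0∞) :=
      measurable_coe_nnreal_ennreal.comp f.continuous.measurable
    have key : ∀ N : ℕ, 0 < N →
        (N:ℝ≥0∞) * ∫⁻ x, (f x:ℝ≥0∞) ∂μ0 ≤ 1 + (N:ℝ≥0∞) * (Λ f : ℝ≥0∞) := by
      intro N hN
      set c : ℝ := ‖mkOfCompact (crealCM f)‖ with hcdef
      set M : ℕ := ⌈(N:ℝ) * c⌉₊ with hMdef
      have hbound : ∀ x, (N:ℝ≥0) * f x ≤ (M:ℝ≥0) := by
        intro x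
        rw [← NNReal.coe_le_coe]
        push_cast
        have h1 : (f x : ℝ) ≤ c := by
          have h2 := (mkOfCompact (crealCM f)).norm_coe_le_norm x
          rw [mkOfCompact_apply, crealCM_apply, Real.norm_eq_abs,
            abs_of_nonneg (f x).coe_nonneg] at h2
          exact h2
        calc (N:ℝ) * (f x:ℝ) ≤ (N:ℝ) * c := by
              apply mul_le_mul_of_nonneg_left h1 (by positivity)
          _ ≤ (M:ℝ) := Nat.le_ceil _
      set slc : ℕ → (X →ᵇ ℝ≥0) := fun i =>
        mkOfCompact ⟨fun x => min 1 ((N:ℝ≥0) * f x - (i:ℝ≥0)),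
          continuous_const.min ((continuous_const.mul f.continuous).sub continuous_const)⟩
        with hslc
      have hKiclosed : ∀ i : ℕ, IsClosed {x : X | (i:ℝ≥0) + 1 ≤ (N:ℝ≥0) * f x} :=
        fun i => isClosed_le continuous_const (continuous_const.mul f.continuous)
      set Ki : ℕ → Compacts X := fun i =>
        ⟨{x | (i:ℝ≥0) + 1 ≤ (N:ℝ≥0) * f x}, (hKiclosed i).isCompact⟩ with hKidef
      have hKiμ : ∀ i, μ0 ↑(Ki i) ≤ (Λ (slc i) : ℝ≥0∞) := by
        intro i
        rw [hμK (Ki i), hΓapp]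
        apply ENNReal.coe_le_coe.mpr
        rw [← hΛc (slc i)]
        apply rieszContentAux_le Λc
        intro x hx
        have hx' : (i:ℝ≥0) + 1 ≤ (N:ℝ≥0) * f x := hx
        have h2 : (1:ℝ≥0) ≤ (N:ℝ≥0) * f x - i := le_tsub_of_add_le_left hx'
        show (1:ℝ≥0) ≤ min 1 ((N:ℝ≥0) * f x - (i:ℝ≥0))
        exact le_min le_rfl h2
      have hsum_eq : ∑ i ∈ Finset.range M, Λ (slc i) = N * Λ f := by
        have hs : ∑ i ∈ Finset.range M, slc i = (N:ℝ≥0) • f := by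
          apply BoundedContinuousFunction.ext
          intro x
          have hpt : (∑ i ∈ Finset.range M, slc i) x = ∑ i ∈ Finset.range M, slc i x := by
            rw [BoundedContinuousFunction.coe_sum, Finset.sum_apply]
          rw [hpt]
          simp only [hslc, mkOfCompact_apply, ContinuousMap.coe_mk]
          rw [nnreal_min_sum ((N:ℝ≥0) * f x) M, min_eq_left (hbound x)]
          rw [BoundedContinuousFunction.coe_smul]
          simp [smul_eq_mul]
        rw [← map_sum, hs, Λ.map_smul, smul_eq_mul]
      have hptwise : ∀ x, (((N:ℝ≥0) * f x : ℝ≥0) : ℝ≥0∞) ≤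
          1 + ∑ i ∈ Finset.range M, ((Ki i : Set X)).indicator (fun _ => (1:ℝ≥0∞)) x := by
        intro x
        set t : ℝ≥0 := (N:ℝ≥0) * f x with htdef
        have hbig := nnreal_min_sum t (M+1)
        rw [Finset.sum_range_succ'] at hbig
        have htM : t ≤ ((M+1:ℕ):ℝ≥0) := le_trans (hbound x) (by exact_mod_cast Nat.le_succ M)
        rw [min_eq_left htM] at hbig
        -- hbig : ∑ i in range M, min 1 (t - ↑(i+1)) + min 1 (t - ↑0) = t
        have hterm : ∀ i ∈ Finset.range M,
            ((min 1 (t - ((i+1:ℕ):ℝ≥0)) : ℝ≥0) : ℝ≥0∞) ≤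
              ((Ki i : Set X)).indicator (fun _ => (1:ℝ≥0∞)) x := by
          intro i _
          by_cases h : (i:ℝ≥0) + 1 ≤ t
          · have hmem : x ∈ (Ki i : Set X) := h
            rw [Set.indicator_of_mem hmem]
            exact_mod_cast min_le_left _ _
          · have h0 : t - ((i+1:ℕ):ℝ≥0) = 0 := by
              apply tsub_eq_zero_of_le
              push_cast
              exact le_of_not_ge h
            rw [h0]
            simp
        calc ((t:ℝ≥0) : ℝ≥0∞)
            = ((∑ i ∈ Finset.range M, min 1 (t - ((i+1:ℕ):ℝ≥0)) + min 1 (t - ((0:ℕ):ℝ≥0)) : ℝ≥0) : ℝ≥0∞) := by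
              rw [hbig]
          _ = (∑ i ∈ Finset.range M, ((min 1 (t - ((i+1:ℕ):ℝ≥0)) : ℝ≥0) : ℝ≥0∞))
              + ((min 1 (t - ((0:ℕ):ℝ≥0)) : ℝ≥0) : ℝ≥0∞) := by
              push_cast
              ring
          _ ≤ (∑ i ∈ Finset.range M, ((Ki i : Set X)).indicator (fun _ => (1:ℝ≥0∞)) x) + 1 := by
              apply add_le_add (Finset.sum_le_sum hterm)
              exact_mod_cast min_le_left _ _
          _ = 1 + ∑ i ∈ Finset.range M, ((Ki i : Set X)).indicator (fun _ => (1:ℝ≥0∞)) x := by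
              rw [add_comm]
      have hKim : ∀ i : ℕ, MeasurableSet (Ki i : Set X) := fun i => (hKiclosed i).measurableSet
      calc (N:ℝ≥0∞) * ∫⁻ x, (f x:ℝ≥0∞) ∂μ0
          = ∫⁻ x, (((N:ℝ≥0) * f x : ℝ≥0) : ℝ≥0∞) ∂μ0 := by
            rw [← lintegral_const_mul _ hfm]
            apply lintegral_congr
            intro x
            push_cast
            ring
        _ ≤ ∫⁻ x, (1 + ∑ i ∈ Finset.range M, ((Ki i : Set X)).indicator (fun _ => (1:ℝ≥0∞)) x) ∂μ0 :=
            lintegral_mono hptwise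
        _ = ∫⁻ _, (1:ℝ≥0∞) ∂μ0
            + ∫⁻ x, (∑ i ∈ Finset.range M, ((Ki i : Set X)).indicator (fun _ => (1:ℝ≥0∞)) x) ∂μ0 :=
            lintegral_add_left measurable_const _
        _ = 1 + ∑ i ∈ Finset.range M, μ0 ↑(Ki i) := by
            rw [lintegral_const, hμuniv, one_mul]
            congr 1
            rw [lintegral_finset_sum _ (fun i _ => measurable_const.indicator (hKim i))]
            congr 1
            funext i
            rw [lintegral_indicator (hKim i), setLIntegral_const, one_mul]
        _ ≤ 1 + ∑ i ∈ Finset.range M, (Λ (slc i) : ℝ≥0∞) := by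
            apply add_le_add_right
            exact Finset.sum_le_sum (fun i _ => hKiμ i)
        _ = 1 + (N:ℝ≥0∞) * (Λ f : ℝ≥0∞) := by
            rw [← ENNReal.coe_finset_sum, hsum_eq]
            push_cast
            ring
    apply ENNReal.le_of_forall_pos_le_add
    intro ε hε _
    obtain ⟨N, hNlt⟩ := ENNReal.exists_inv_nat_lt (by exact_mod_cast hε.ne' : (ε:ℝ≥0∞) ≠ 0)
    have hN0 : 0 < N := by
      rcases Nat.eq_zero_or_pos N with h | h
      · exfalso
        rw [h] at hNlt
        simp at hNlt
      · exact h
    have hNne : (N:ℝ≥0∞) ≠ 0 := by exact_mod_cast hN0.ne'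
    have hNtop : (N:ℝ≥0∞) ≠ ∞ := ENNReal.natCast_ne_top N
    calc ∫⁻ x, (f x:ℝ≥0∞) ∂μ0
        = (N:ℝ≥0∞)⁻¹ * ((N:ℝ≥0∞) * ∫⁻ x, (f x:ℝ≥0∞) ∂μ0) := by
          rw [← mul_assoc, ENNReal.inv_mul_cancel hNne hNtop, one_mul]
      _ ≤ (N:ℝ≥0∞)⁻¹ * (1 + (N:ℝ≥0∞) * (Λ f : ℝ≥0∞)) := mul_le_mul_right (key N hN0) _
      _ = (N:ℝ≥0∞)⁻¹ + (N:ℝ≥0∞)⁻¹ * ((N:ℝ≥0∞) * (Λ f : ℝ≥0∞)) := by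
          rw [mul_add, mul_one]
      _ = (N:ℝ≥0∞)⁻¹ + (Λ f : ℝ≥0∞) := by
          rw [← mul_assoc, ENNReal.inv_mul_cancel hNne hNtop, one_mul]
      _ ≤ (Λ f : ℝ≥0∞) + ε := by
          rw [add_comm]
          exact add_le_add_right hNlt.le _
  -- equality of lintegral and Λ
  have hfmeas : ∀ f : X →ᵇ ℝ≥0, Measurable fun x => (f x : ℝ≥0∞) := fun f =>
    measurable_coe_nnreal_ennreal.comp f.continuous.measurable
  have heq : ∀ f : X →ᵇ ℝ≥0, ∫⁻ x, (f x : ℝ≥0∞) ∂μ0 = (Λ f : ℝ≥0∞) := by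
    intro f
    refine le_antisymm (dirA f) ?_
    set c : ℝ≥0 := Real.toNNReal ‖mkOfCompact (crealCM f)‖ with hc
    have hfc : ∀ x, f x ≤ c := by
      intro x
      rw [← NNReal.coe_le_coe]
      have h2 := (mkOfCompact (crealCM f)).norm_coe_le_norm x
      rw [mkOfCompact_apply, crealCM_apply, Real.norm_eq_abs,
        abs_of_nonneg (f x).coe_nonneg] at h2
      rw [hc, Real.coe_toNNReal _ (norm_nonneg _)]
      exact h2
    set g : X →ᵇ ℝ≥0 :=
      mkOfCompact ⟨fun x => c - f x, continuous_const.sub f.continuous⟩ with hg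
    have hfg : ∀ x, f x + g x = c := by
      intro x
      simp only [hg, mkOfCompact_apply, ContinuousMap.coe_mk]
      exact add_tsub_cancel_of_le (hfc x)
    have hconst : f + g = c • (1 : X →ᵇ ℝ≥0) := by
      apply BoundedContinuousFunction.ext
      intro x
      rw [BoundedContinuousFunction.add_apply, hfg x, BoundedContinuousFunction.coe_smul]
      simp [smul_eq_mul]
    have hΛsum : Λ f + Λ g = c := by
      rw [← map_add, hconst, Λ.map_smul, hΛone, smul_eq_mul, mul_one]
    have hintsum : (∫⁻ x, (f x : ℝ≥0∞) ∂μ0) + (∫⁻ x, (g x : ℝ≥0∞) ∂μ0) = (c:ℝ≥0∞) := by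
      rw [← lintegral_add_left (hfmeas f)]
      have hpt : (fun x => (f x:ℝ≥0∞) + (g x:ℝ≥0∞)) = fun _ => (c:ℝ≥0∞) := by
        funext x
        rw [← ENNReal.coe_add, hfg x]
      rw [hpt, lintegral_const, hμuniv, mul_one]
    have h1' : (Λ f : ℝ≥0∞) + ∫⁻ x, (g x : ℝ≥0∞) ∂μ0
        ≤ (∫⁻ x, (f x : ℝ≥0∞) ∂μ0) + ∫⁻ x, (g x : ℝ≥0∞) ∂μ0 := by
      calc (Λ f:ℝ≥0∞) + ∫⁻ x, (g x : ℝ≥0∞) ∂μ0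
          ≤ (Λ f:ℝ≥0∞) + (Λ g:ℝ≥0∞) := add_le_add_right (dirA g) _
        _ = ((Λ f + Λ g : ℝ≥0):ℝ≥0∞) := (ENNReal.coe_add _ _).symm
        _ = (c:ℝ≥0∞) := by rw [hΛsum]
        _ = _ := hintsum.symm
    have hgne : (∫⁻ x, (g x : ℝ≥0∞) ∂μ0) ≠ ∞ :=
      ne_top_of_le_ne_top ENNReal.coe_ne_top (dirA g)
    exact (ENNReal.add_le_add_iff_right hgne).mp h1'
  -- representation for real continuous functions
  refine ⟨μ0, hprob, ?_⟩
  have hnn : ∀ g : C(X,ℝ), (∀ x, 0 ≤ g x) → ∫ x, g x ∂μ0 = ℓ g := by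
    intro g hgpos
    set f : X →ᵇ ℝ≥0 :=
      mkOfCompact ⟨fun x => Real.toNNReal (g x),
        continuous_real_toNNReal.comp g.continuous⟩ with hf
    have hcf : crealCM f = g := by
      apply ContinuousMap.ext
      intro x
      simp only [crealCM_apply, hf, mkOfCompact_apply, ContinuousMap.coe_mk]
      exact Real.coe_toNNReal _ (hgpos x)
    have h1' : ∫ x, g x ∂μ0 = (∫⁻ x, ENNReal.ofReal (g x) ∂μ0).toReal :=
      integral_eq_lintegral_of_nonneg_ae (Filter.Eventually.of_forall hgpos)
        g.continuous.aestronglyMeasurable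
    have h2' : ∀ x, ENNReal.ofReal (g x) = (f x : ℝ≥0∞) := by
      intro x
      simp [hf, ENNReal.ofReal]
    rw [h1', lintegral_congr h2', heq f, ENNReal.coe_toReal, hΛcoe f, hcf]
  intro g
  set c : ℝ := ‖mkOfCompact g‖ with hcg
  have habs : ∀ x, |g x| ≤ c := by
    intro x
    have := (mkOfCompact g).norm_coe_le_norm x
    rwa [mkOfCompact_apply, Real.norm_eq_abs] at this
  have hgc : ∀ x, 0 ≤ (g + ContinuousMap.const X c) x := by
    intro x
    have := (abs_le.mp (habs x)).1
    simp only [ContinuousMap.add_apply, ContinuousMap.const_apply]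
    linarith
  have hint := hnn (g + ContinuousMap.const X c) hgc
  have hLHS : ∫ x, (g + ContinuousMap.const X c) x ∂μ0 = (∫ x, g x ∂μ0) + c := by
    have : (fun x => (g + ContinuousMap.const X c) x) = fun x => g x + c := by
      funext x
      simp
    rw [this, integral_add (cm_integrable g μ0) (integrable_const c), integral_const]
    simp [hμuniv]
  have hconst1 : ContinuousMap.const X c = c • (1 : C(X,ℝ)) := by
    apply ContinuousMap.ext
    intro x
    simp
  have hRHS : ℓ (g + ContinuousMap.const X c) = ℓ g + c := by
    rw [hadd, hconst1, hsmul, h1, mul_one]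
  rw [hLHS, hRHS] at hint
  linarith

lemma integral_dist_le (g h : C(X,ℝ)) (μ : Measure X) [IsFiniteMeasure μ] (C : ℝ≥0)
    (hC : μ Set.univ ≤ C) :
    dist (∫ x, g x ∂μ) (∫ x, h x ∂μ) ≤ dist g h * C := by
  rw [dist_eq_norm, ← integral_sub (cm_integrable g μ) (cm_integrable h μ)]
  calc ‖∫ x, (g x - h x) ∂μ‖ ≤ dist g h * (μ Set.univ).toReal := by
        apply norm_integral_le_of_norm_le_const
        filter_upwards with x
        rw [Real.norm_eq_abs, ← Real.dist_eq]
        exact ContinuousMap.dist_apply_le_dist x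
    _ ≤ dist g h * C := by
        apply mul_le_mul_of_nonneg_left _ dist_nonneg
        exact ENNReal.toReal_le_coe_of_le_coe hC

lemma integral_abs_le (g : C(X,ℝ)) (μ : Measure X) [IsFiniteMeasure μ] (C : ℝ≥0)
    (hC : μ Set.univ ≤ C) : |∫ x, g x ∂μ| ≤ ‖mkOfCompact g‖ * C := by
  rw [← Real.norm_eq_abs]
  calc ‖∫ x, g x ∂μ‖ ≤ ‖mkOfCompact g‖ * (μ Set.univ).toReal := by
        apply norm_integral_le_of_norm_le_const
        filter_upwards with x
        exact (mkOfCompact g).norm_coe_le_norm x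
    _ ≤ ‖mkOfCompact g‖ * C := by
        apply mul_le_mul_of_nonneg_left _ (norm_nonneg _)
        exact ENNReal.toReal_le_coe_of_le_coe hC

lemma exists_subseq_integrals_tendsto (μs : ℕ → FiniteMeasure X) (C : ℝ≥0)
    (hC : ∀ n, (μs n : Measure X) Set.univ ≤ C) :
    ∃ φ : ℕ → ℕ, StrictMono φ ∧ ∀ g : C(X,ℝ), ∃ l : ℝ,
      Tendsto (fun n => ∫ x, g x ∂(μs (φ n) : Measure X)) atTop (𝓝 l) := by
  have hD : DenseRange (denseSeq C(X,ℝ)) := denseRange_denseSeq _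
  set D := denseSeq C(X,ℝ) with hDdef
  set T : ℕ → ℕ → ℝ := fun n i => ∫ x, D i x ∂(μs n : Measure X) with hT
  set S : Set (ℕ → ℝ) := Set.pi Set.univ (fun i => Icc (-(‖mkOfCompact (D i)‖ * C)) (‖mkOfCompact (D i)‖ * C)) with hS
  have hScomp : IsCompact S := isCompact_univ_pi fun i => isCompact_Icc
  have hTS : ∀ n, T n ∈ S := by
    intro n
    rw [hS, Set.mem_univ_pi]
    intro i
    exact abs_le.mp (integral_abs_le (D i) _ C (hC n))
  obtain ⟨a, -, φ, hφ, hconv⟩ := hScomp.isSeqCompact hTS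
  refine ⟨φ, hφ, fun g => ?_⟩
  have hcoord : ∀ i, Tendsto (fun n => T (φ n) i) atTop (𝓝 (a i)) := fun i =>
    (tendsto_pi_nhds.mp hconv) i
  have hcauchy : CauchySeq (fun n => ∫ x, g x ∂(μs (φ n) : Measure X)) := by
    rw [Metric.cauchySeq_iff]
    intro ε hε
    have hε4 : 0 < ε / (4 * (C + 1)) := by positivity
    obtain ⟨i, hi⟩ := hD.exists_dist_lt g hε4
    have hgi : ∀ k, dist (∫ x, g x ∂(μs k : Measure X)) (T k i) < ε / 4 := by
      intro k
      calc dist (∫ x, g x ∂(μs k : Measure X)) (T k i)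
          ≤ dist g (D i) * C := integral_dist_le g (D i) _ C (hC k)
        _ ≤ dist g (D i) * (C + 1) := by
            apply mul_le_mul_of_nonneg_left _ dist_nonneg
            exact_mod_cast le_of_lt (lt_add_one (C:ℝ))
        _ < ε / (4 * (C + 1)) * (C + 1) := by
            apply mul_lt_mul_of_pos_right hi
            positivity
        _ = ε / 4 := by field_simp
    obtain ⟨N, hN⟩ := Metric.cauchySeq_iff.mp (hcoord i).cauchySeq (ε/4) (by positivity)
    refine ⟨N, fun m hm n hn => ?_⟩
    calc dist (∫ x, g x ∂(μs (φ m) : Measure X)) (∫ x, g x ∂(μs (φ n) : Measure X))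
        ≤ dist (∫ x, g x ∂(μs (φ m) : Measure X)) (T (φ m) i)
          + dist (T (φ m) i) (T (φ n) i)
          + dist (T (φ n) i) (∫ x, g x ∂(μs (φ n) : Measure X)) := dist_triangle4 _ _ _ _
      _ < ε/4 + ε/4 + ε/4 := by
          apply add_lt_add (add_lt_add (hgi (φ m)) (hN m hm n hn))
          rw [dist_comm]; exact hgi (φ n)
      _ ≤ ε := by linarith
  exact cauchySeq_tendsto_of_complete hcauchy

omit [MetricSpace X] [CompactSpace X] [BorelSpace X] in
lemma prob_eq_of_le (ν μ : Measure X) [IsProbabilityMeasure ν] [IsProbabilityMeasure μ]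
    (h : ν ≤ μ) : ν = μ := by
  ext s hs
  refine le_antisymm (h s) ?_
  have h1 : ν s + ν sᶜ = 1 := by
    rw [measure_add_measure_compl hs, measure_univ]
  have h2 : μ s + μ sᶜ = 1 := by
    rw [measure_add_measure_compl hs, measure_univ]
  have hc : ν sᶜ ≤ μ sᶜ := h sᶜ
  have key : μ s + ν sᶜ ≤ ν s + ν sᶜ := by
    calc μ s + ν sᶜ ≤ μ s + μ sᶜ := by gcongr
    _ = 1 := h2
    _ = ν s + ν sᶜ := h1.symm
  have hne : ν sᶜ ≠ ∞ := (measure_lt_top ν _).ne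
  exact (ENNReal.add_le_add_iff_right hne).mp key

end AuxiliaryEquidistribution

/-- On a compact metric space, a sequence of finite Borel measures with uniformly bounded
masses tending to `1`, all of whose weak-* cluster values dominate a fixed Borel probability
measure `ν`, converges weakly to `ν`.  A weak-* cluster value is a measure `μ` such that along
some subsequence the integrals of every continuous function converge to those of `μ`; weak
convergence means convergence of the integrals of all continuous functions. -/
theorem tendsto_of_forall_cluster_le
    {X : Type*} [MetricSpace X] [CompactSpace X] [MeasurableSpace X] [BorelSpace X]
    (μs : ℕ → FiniteMeasure X)
    (hsup : ∃ C : ℝ≥0, ∀ n, (μs n : Measure X) Set.univ ≤ C)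
    (hmass : Tendsto (fun n => (μs n : Measure X) Set.univ) atTop (𝓝 1))
    (ν : Measure X) [IsProbabilityMeasure ν]
    (hcluster : ∀ μ : FiniteMeasure X,
      (∃ φ : ℕ → ℕ, StrictMono φ ∧ ∀ g : C(X, ℝ),
        Tendsto (fun n => ∫ x, g x ∂(μs (φ n) : Measure X)) atTop
          (𝓝 (∫ x, g x ∂(μ : Measure X)))) →
      ν ≤ (μ : Measure X)) :
    ∀ g : C(X, ℝ),
      Tendsto (fun n => ∫ x, g x ∂(μs n : Measure X)) atTop (𝓝 (∫ x, g x ∂ν)) := by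
  intro g
  by_contra hcon
  rw [Metric.tendsto_atTop] at hcon
  push_neg at hcon
  obtain ⟨ε, hε, hfreq⟩ := hcon
  have hfr : ∃ᶠ n in atTop,
      ε ≤ dist (∫ x, g x ∂(μs n : Measure X)) (∫ x, g x ∂ν) :=
    Filter.frequently_atTop.mpr hfreq
  obtain ⟨ψ, hψmono, hψ⟩ := Filter.extraction_of_frequently_atTop hfr
  obtain ⟨C, hC⟩ := hsup
  obtain ⟨σ, hσmono, hlim⟩ :=
    exists_subseq_integrals_tendsto (fun n => μs (ψ n)) C (fun n => hC (ψ n))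
  have hφmono : StrictMono (fun n => ψ (σ n)) := fun _ _ h => hψmono (hσmono h)
  choose ℓ hl using hlim
  -- properties of the limit functional
  have hadd : ∀ g1 g2 : C(X,ℝ), ℓ (g1 + g2) = ℓ g1 + ℓ g2 := by
    intro g1 g2
    refine tendsto_nhds_unique (hl (g1+g2)) ?_
    have h2 := (hl g1).add (hl g2)
    have heqfun : (fun n => ∫ x, (g1+g2) x ∂(μs (ψ (σ n)) : Measure X))
        = fun n => (∫ x, g1 x ∂(μs (ψ (σ n)) : Measure X))
          + ∫ x, g2 x ∂(μs (ψ (σ n)) : Measure X) := by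
      funext n
      have : (fun x => (g1+g2) x) = fun x => g1 x + g2 x := by funext x; simp
      rw [this, integral_add (cm_integrable g1 _) (cm_integrable g2 _)]
    rw [heqfun]
    exact h2
  have hsmul : ∀ (r : ℝ) (g1 : C(X,ℝ)), ℓ (r • g1) = r * ℓ g1 := by
    intro r g1
    refine tendsto_nhds_unique (hl (r • g1)) ?_
    have h2 := (hl g1).const_mul r
    have heqfun : (fun n => ∫ x, (r • g1) x ∂(μs (ψ (σ n)) : Measure X))
        = fun n => r * ∫ x, g1 x ∂(μs (ψ (σ n)) : Measure X) := by
      funext n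
      have : (fun x => (r • g1) x) = fun x => r • g1 x := by funext x; simp
      rw [this, integral_smul, smul_eq_mul]
    rw [heqfun]
    exact h2
  have hmono : ∀ g1 g2 : C(X,ℝ), g1 ≤ g2 → ℓ g1 ≤ ℓ g2 := by
    intro g1 g2 h12
    refine le_of_tendsto_of_tendsto' (hl g1) (hl g2) ?_
    intro n
    exact integral_mono (cm_integrable g1 _) (cm_integrable g2 _)
      (fun x => ContinuousMap.le_def.mp h12 x)
  have h1 : ℓ 1 = 1 := by
    have hm1 : Tendsto (fun n => ((μs (ψ (σ n)) : Measure X) Set.univ)) atTop (𝓝 1) :=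
      hmass.comp hφmono.tendsto_atTop
    have hm2 : Tendsto (fun n => ((μs (ψ (σ n)) : Measure X) Set.univ).toReal) atTop (𝓝 1) := by
      have := (ENNReal.tendsto_toReal (a := 1) (by simp)).comp hm1
      exact this
    refine tendsto_nhds_unique (hl 1) ?_
    have heqfun : (fun n => ∫ x, (1:C(X,ℝ)) x ∂(μs (ψ (σ n)) : Measure X))
        = fun n => ((μs (ψ (σ n)) : Measure X) Set.univ).toReal := by
      funext n
      have : (fun x : X => (1:C(X,ℝ)) x) = fun _ : X => (1:ℝ) := by funext x; simp
      rw [this, integral_const, smul_eq_mul, mul_one, measureReal_def]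
    rw [heqfun]
    exact hm2
  obtain ⟨μ0, hμprob, hrepr⟩ := exists_repr ℓ hadd hsmul hmono h1
  haveI := hμprob
  have hνμ : ν ≤ μ0 := by
    refine hcluster ⟨μ0, inferInstance⟩ ⟨fun n => ψ (σ n), hφmono, ?_⟩
    intro g'
    have h0 : ∫ x, g' x ∂((⟨μ0, inferInstance⟩ : FiniteMeasure X) : Measure X) = ℓ g' :=
      hrepr g'
    exact h0 ▸ hl g'
  have hν_eq : ν = μ0 := prob_eq_of_le ν μ0 hνμ
  have hlimg : Tendsto (fun n => ∫ x, g x ∂(μs (ψ (σ n)) : Measure X)) atTop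
      (𝓝 (∫ x, g x ∂ν)) := by
    rw [hν_eq, hrepr g]
    exact hl g
  have hdist : Tendsto (fun n => dist (∫ x, g x ∂(μs (ψ (σ n)) : Measure X)) (∫ x, g x ∂ν))
      atTop (𝓝 0) := tendsto_iff_dist_tendsto_zero.mp hlimg
  obtain ⟨n, hn⟩ := (hdist.eventually (gt_mem_nhds hε)).exists
  exact absurd (hψ (σ n)) (not_le.mpr hn)
end
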